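/- Let L be an n×n ICB matrix in δ-block echelon form and K a field. Let J be the ideal of K[x₁,…,xₙ] generated by the binomials f_C for all nonempty C ⊆ {1,…,n−1}. Then J : (x_n) = J, and J equals the lattice ideal I(𝓛). -/

import Mathlib

open MvPolynomial Finset

/-- A critical binomial (CB) matrix. -/
def IsCB (n : ℕ) (L : Matrix (Fin n) (Fin n) ℤ) : Prop :=
  (∀ i, 0 < L i i) ∧ (∀ i j : Fin n, i ≠ j → L i j ≤ 0) ∧ (∀ i, ∑ j, L i j = 0) ∧
    (∀ j, ∃ i, i ≠ j ∧ L i j ≠ 0)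

/-- Irreducibility of a square matrix. -/
def IsIrreducibleMat {n : ℕ} (M : Matrix (Fin n) (Fin n) ℤ) : Prop :=
  ¬ ∃ I J : Set (Fin n), I.Nonempty ∧ J.Nonempty ∧ Disjoint I J ∧ I ∪ J = Set.univ ∧
      ∀ i ∈ I, ∀ j ∈ J, M i j = 0

def IsICB (n : ℕ) (L : Matrix (Fin n) (Fin n) ℤ) : Prop := IsCB n L ∧ IsIrreducibleMat L

def IsPCB (n : ℕ) (L : Matrix (Fin n) (Fin n) ℤ) : Prop :=
  IsCB n L ∧ ∀ i j : Fin n, i ≠ j → L i j < 0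

noncomputable def posExp {n : ℕ} (m : Fin n → ℤ) : Fin n →₀ ℕ :=
  Finsupp.equivFunOnFinite.symm fun i => (m i).toNat

noncomputable def negExp {n : ℕ} (m : Fin n → ℤ) : Fin n →₀ ℕ :=
  Finsupp.equivFunOnFinite.symm fun i => (-(m i)).toNat

noncomputable def binom (K : Type*) [Field K] {n : ℕ} (m : Fin n → ℤ) :
    MvPolynomial (Fin n) K :=
  monomial (posExp m) 1 - monomial (negExp m) 1

def colLattice {n : ℕ} (L : Matrix (Fin n) (Fin n) ℤ) : AddSubgroup (Fin n → ℤ) :=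
  AddSubgroup.closure {v | ∃ j : Fin n, v = fun i => L i j}

noncomputable def latticeIdeal (K : Type*) [Field K] {n : ℕ} (L : Matrix (Fin n) (Fin n) ℤ) :
    Ideal (MvPolynomial (Fin n) K) :=
  Ideal.span {f | ∃ m ∈ colLattice L, f = binom K m}

noncomputable def matrixIdeal (K : Type*) [Field K] {n : ℕ} (L : Matrix (Fin n) (Fin n) ℤ) :
    Ideal (MvPolynomial (Fin n) K) :=
  Ideal.span {f | ∃ j : Fin n, f = binom K fun i => L i j}

def chi {n : ℕ} (C : Finset (Fin n)) : Fin n → ℤ := fun i => if i ∈ C then 1 else 0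

/-- `L` is in `δ`-block echelon form: there is a partition of `{1,…,n-1}` into `δ`
consecutive nonempty intervals `I₁,…,I_δ` with `I_{δ+1} = {n}` (encoded by the monotone
surjection `β` sending each index to its block, with only the last vertex in the last
block) such that `L_{I_i,I_j} = 0` whenever `j + 2 ≤ i`, and every column of
`L_{I_{j+1},I_j}` is nonzero. -/
def IsBlockEchelon (n δ : ℕ) (L : Matrix (Fin n) (Fin n) ℤ) : Prop :=
  ∃ β : Fin n → Fin (δ + 1), Monotone β ∧ Function.Surjective β ∧
    (∀ a : Fin n, β a = Fin.last δ ↔ (a : ℕ) = n - 1) ∧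
    (∀ a b : Fin n, (β b : ℕ) + 2 ≤ (β a : ℕ) → L a b = 0) ∧
    (∀ b : Fin n, β b ≠ Fin.last δ →
      ∃ a : Fin n, (β a : ℕ) = (β b : ℕ) + 1 ∧ L a b ≠ 0)

noncomputable def toN {n : ℕ} (v : Fin n → ℤ) : Fin n →₀ ℕ :=
  Finsupp.equivFunOnFinite.symm fun i => (v i).toNat

@[simp] lemma toN_apply {n : ℕ} (v : Fin n → ℤ) (i : Fin n) : toN v i = (v i).toNat := rfl

lemma posExp_eq_toN {n : ℕ} (m : Fin n → ℤ) : posExp m = toN m := rfl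

lemma negExp_eq_toN {n : ℕ} (m : Fin n → ℤ) : negExp m = toN (-m) := rfl

lemma toN_coe {n : ℕ} (d : Fin n →₀ ℕ) : toN (fun i => (d i : ℤ)) = d := by
  ext i; simp

lemma binom_def' (K : Type*) [Field K] {n : ℕ} (m : Fin n → ℤ) :
    binom K m = monomial (toN m) 1 - monomial (toN (-m)) 1 := rfl

lemma binom_neg (K : Type*) [Field K] {n : ℕ} (m : Fin n → ℤ) :
    binom K (-m) = - binom K m := by
  rw [binom_def', binom_def', neg_neg, neg_sub]

/-- Lemma B : factorization of a difference of monomials with exponents differing by `m`. -/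
lemma monomial_sub_factor (K : Type*) [Field K] {n : ℕ} (c m : Fin n → ℤ)
    (hc : ∀ i, 0 ≤ c i) (hcm : ∀ i, 0 ≤ c i + m i) :
    (monomial (toN (c + m)) (1:K)) - monomial (toN c) 1
      = monomial (toN (fun i => c i - (-(m i)).toNat)) 1 * binom K m := by
  have e1 : toN (fun i => c i - (-(m i)).toNat) + toN m = toN (c + m) := by
    ext i
    have h1 := hc i; have h2 := hcm i
    simp only [Finsupp.add_apply, toN_apply, Pi.add_apply]
    omega
  have e2 : toN (fun i => c i - (-(m i)).toNat) + toN (-m) = toN c := by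
    ext i
    have h1 := hc i; have h2 := hcm i
    simp only [Finsupp.add_apply, toN_apply, Pi.add_apply, Pi.neg_apply]
    omega
  rw [binom_def', mul_sub, monomial_mul, monomial_mul, mul_one, e1, e2]

lemma mulVec_one_eq_zero {n : ℕ} (L : Matrix (Fin n) (Fin n) ℤ)
    (hrow : ∀ i, ∑ j, L i j = 0) : L.mulVec (fun _ => 1) = 0 := by
  funext i
  simp [Matrix.mulVec, dotProduct, hrow i]

lemma mulVec_mem_colLattice {n : ℕ} (L : Matrix (Fin n) (Fin n) ℤ) (u : Fin n → ℤ) :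
    L.mulVec u ∈ colLattice L := by
  have h : L.mulVec u = ∑ j : Fin n, u j • (fun i => L i j) := by
    funext i
    simp [Matrix.mulVec, dotProduct, Finset.sum_apply, mul_comm]
  rw [h]
  refine AddSubgroup.sum_mem _ fun j _ => AddSubgroup.zsmul_mem _ ?_ _
  exact AddSubgroup.subset_closure (Set.mem_setOf.2 ⟨j, rfl⟩)

def mulVecRange {n : ℕ} (L : Matrix (Fin n) (Fin n) ℤ) : AddSubgroup (Fin n → ℤ) where
  carrier := {m | ∃ u, m = L.mulVec u}
  add_mem' := by
    rintro a b ⟨u, rfl⟩ ⟨v, rfl⟩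
    exact ⟨u + v, (Matrix.mulVec_add L u v).symm⟩
  zero_mem' := ⟨0, (Matrix.mulVec_zero L).symm⟩
  neg_mem' := by
    rintro a ⟨u, rfl⟩
    refine ⟨-u, ?_⟩
    funext i
    simp [Matrix.mulVec, dotProduct, Finset.sum_neg_distrib]

lemma mem_colLattice_iff {n : ℕ} (L : Matrix (Fin n) (Fin n) ℤ) (m : Fin n → ℤ) :
    m ∈ colLattice L ↔ ∃ u, m = L.mulVec u := by
  constructor
  · intro hm
    have h : colLattice L ≤ mulVecRange L := by
      refine AddSubgroup.closure_le _ |>.2 ?_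
      rintro v ⟨j, rfl⟩
      refine ⟨Pi.single j 1, ?_⟩
      funext i
      simp [Matrix.mulVec, dotProduct, Pi.single_apply, mul_ite]
    obtain ⟨u, hu⟩ := h hm
    exact ⟨u, hu⟩
  · rintro ⟨u, rfl⟩; exact mulVec_mem_colLattice L u

lemma binom_zero (K : Type*) [Field K] {n : ℕ} : binom K (0 : Fin n → ℤ) = 0 := by
  rw [binom_def', neg_zero, sub_self]

section Main

variable {n : ℕ} (L : Matrix (Fin n) (Fin n) ℤ) (K : Type*) [Field K] (ℓ : Fin n)

noncomputable def Jdl : Ideal (MvPolynomial (Fin n) K) :=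
  Ideal.span {f | ∃ C : Finset (Fin n),
    C.Nonempty ∧ ℓ ∉ C ∧ f = binom K (L.mulVec (chi C))}

variable (hsign : ∀ i j : Fin n, i ≠ j → L i j ≤ 0) (hrow : ∀ i, ∑ j, L i j = 0)

include hrow in
lemma binom_chi_mem (C : Finset (Fin n)) (hCne : C.Nonempty) (hCuniv : C ≠ univ) :
    binom K (L.mulVec (chi C)) ∈ Jdl L K ℓ := by
  by_cases hl : ℓ ∈ C
  · have hcc : Cᶜ.Nonempty := by
      have h1 : ∃ x, x ∉ C := by
        by_contra h
        push_neg at h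
        exact hCuniv (Finset.eq_univ_iff_forall.2 h)
      obtain ⟨x, hx⟩ := h1
      exact ⟨x, Finset.mem_compl.2 hx⟩
    have hchi : chi C = (fun _ => (1:ℤ)) - chi Cᶜ := by
      funext i
      by_cases h : i ∈ C <;> simp [chi, h]
    have : L.mulVec (chi C) = - L.mulVec (chi Cᶜ) := by
      rw [hchi, Matrix.mulVec_sub, mulVec_one_eq_zero L hrow, zero_sub]
    rw [this, binom_neg]
    refine neg_mem (Ideal.subset_span ?_)
    exact ⟨Cᶜ, hcc, by simp [hl], rfl⟩
  · exact Ideal.subset_span ⟨C, hCne, hl, rfl⟩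

include hsign hrow in
lemma binom_mulVec_mem_aux (B : ℕ) :
    ∀ u : Fin n → ℤ, (∀ i, 0 ≤ u i) → (∀ i, u i ≤ B) → (∃ i, u i = 0) →
      binom K (L.mulVec u) ∈ Jdl L K ℓ := by
  induction B with
  | zero =>
    intro u h0 hB _
    have : u = 0 := funext fun i => le_antisymm (hB i) (h0 i)
    rw [this, Matrix.mulVec_zero, binom_zero]
    exact zero_mem _
  | succ B ih =>
    intro u h0 hB hz
    obtain ⟨i₀, hi₀⟩ := hz
    set C : Finset (Fin n) := univ.filter (fun i => u i = B + 1) with hCdef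
    by_cases hC : C.Nonempty
    · -- peel the top level
      have hi₀C : i₀ ∉ C := by simp [hCdef, hi₀]; omega
      have hCuniv : C ≠ univ := fun h => hi₀C (h ▸ mem_univ i₀)
      have hmemC : ∀ i, i ∈ C ↔ u i = B + 1 := by intro i; simp [hCdef]
      set u' : Fin n → ℤ := fun i => u i - chi C i with hu'def
      have hu'0 : ∀ i, 0 ≤ u' i := by
        intro i
        by_cases h : i ∈ C
        · have := (hmemC i).1 h; simp [hu'def, chi, h, this]
        · simp [hu'def, chi, h, h0 i]
      have hu'B : ∀ i, u' i ≤ B := by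
        intro i
        by_cases h : i ∈ C
        · have := (hmemC i).1 h; simp [hu'def, chi, h, this]
        · have h1 := hB i
          have h2 : u i ≠ B + 1 := fun hc => h ((hmemC i).2 hc)
          simp only [hu'def, chi, h, if_neg h]
          omega
      have hu'z : ∃ i, u' i = 0 := ⟨i₀, by simp [hu'def, chi, hi₀C, hi₀]⟩
      set m : Fin n → ℤ := L.mulVec u with hm
      set m' : Fin n → ℤ := L.mulVec u' with hm'
      set mc : Fin n → ℤ := L.mulVec (chi C) with hmc
      have hsplit : ∀ i, m i = m' i + mc i := by
        intro i
        have : u = u' + chi C := by funext j; simp [hu'def]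
        rw [hm, this, Matrix.mulVec_add]
        simp [hm', hmc]
      -- Claim 1 : intermediate nonnegativity
      have claim1 : ∀ i, 0 ≤ ((-(m i)).toNat : ℤ) + m' i := by
        intro i
        by_cases hiC : i ∈ C
        · have hm'nn : 0 ≤ m' i := by
            have key : ∑ j, L i j * B ≤ ∑ j, L i j * u' j := by
              refine Finset.sum_le_sum fun j _ => ?_
              by_cases hji : j = i
              · subst hji
                have : u' j = B := by
                  have := (hmemC j).1 hiC; simp [hu'def, chi, hiC, this]
                rw [this]
              · exact mul_le_mul_of_nonpos_left (hu'B j) (hsign i j (Ne.symm hji))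
            have hzero : ∑ j, L i j * (B:ℤ) = 0 := by
              rw [← Finset.sum_mul, hrow i, zero_mul]
            calc (0:ℤ) = ∑ j, L i j * B := hzero.symm
              _ ≤ ∑ j, L i j * u' j := key
              _ = m' i := rfl
          have : (0:ℤ) ≤ ((-(m i)).toNat : ℤ) := Int.ofNat_nonneg _
          omega
        · have hmci : mc i ≤ 0 := by
            have : ∀ j ∈ univ, L i j * chi C j ≤ 0 := by
              intro j _
              by_cases hj : j ∈ C
              · have hji : j ≠ i := fun h => hiC (h ▸ hj)
                simp [chi, hj]
                exact hsign i j (Ne.symm hji)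
              · simp [chi, hj]
            exact Finset.sum_nonpos this
          have h1 : m' i = m i - mc i := by have := hsplit i; omega
          have h2 : (0:ℤ) ≤ ((-(m i)).toNat : ℤ) + m i := by omega
          omega
      -- assemble
      set c : Fin n → ℤ := fun i => ((-(m i)).toNat : ℤ) with hcdef
      have hc : ∀ i, 0 ≤ c i := fun i => Int.ofNat_nonneg _
      have hcm' : ∀ i, 0 ≤ c i + m' i := claim1
      have hcm : ∀ i, 0 ≤ c i + m i := by intro i; simp only [hcdef]; omega
      have e1 : toN (c + m) = toN m := by
        ext i; simp only [toN_apply, Pi.add_apply, hcdef]; omega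
      have e2 : toN c = toN (-m) := by
        ext i; simp only [toN_apply, hcdef, Pi.neg_apply]; omega
      have hbinom : binom K m =
          (monomial (toN (c + m)) (1:K) - monomial (toN (c + m')) 1)
            + (monomial (toN (c + m')) (1:K) - monomial (toN c) 1) := by
        rw [binom_def', ← e1, ← e2, sub_add_sub_cancel]
      rw [hbinom]
      refine add_mem ?_ ?_
      · have e4 : ((c + m') + mc) = c + m := by
          funext i; have := hsplit i; simp only [Pi.add_apply]; omega
        have hf := monomial_sub_factor K (c + m') mc hcm'
          (fun i => by
            have h5 : (c + m') i + mc i = c i + m i := by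
              have := hsplit i; simp only [Pi.add_apply]; omega
            rw [h5]; exact hcm i)
        rw [e4] at hf
        rw [hf]
        exact Ideal.mul_mem_left _ _ (binom_chi_mem L K ℓ hrow C hC hCuniv)
      · have hf := monomial_sub_factor K c m' hc hcm'
        rw [hf]
        exact Ideal.mul_mem_left _ _ (ih u' hu'0 hu'B hu'z)
    · -- no top level : bound drops
      have : ∀ i, u i ≤ B := by
        intro i
        have h1 := hB i
        have h2 : u i ≠ B + 1 := by
          intro hc
          exact hC ⟨i, by simp [hCdef, hc]⟩
        omega
      exact ih u h0 this ⟨i₀, hi₀⟩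

include hsign hrow in
lemma binom_mulVec_mem (u : Fin n → ℤ) : binom K (L.mulVec u) ∈ Jdl L K ℓ := by
  obtain ⟨i₀, -, hi₀⟩ := Finset.exists_min_image univ u ⟨ℓ, mem_univ ℓ⟩
  set u₀ : Fin n → ℤ := fun i => u i - u i₀ with hu₀
  have h0 : ∀ i, 0 ≤ u₀ i := fun i => by simp [hu₀]; exact hi₀ i (mem_univ i)
  have hmv : L.mulVec u₀ = L.mulVec u := by
    funext i
    simp only [Matrix.mulVec, dotProduct, hu₀, mul_sub, Finset.sum_sub_distrib]
    rw [← Finset.sum_mul, hrow i, zero_mul, sub_zero]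
  have hz : ∃ i, u₀ i = 0 := ⟨i₀, by simp [hu₀]⟩
  have hBnd : ∀ i, u₀ i ≤ ((∑ j, u₀ j).toNat : ℤ) := by
    intro i
    have h1 : u₀ i ≤ ∑ j, u₀ j :=
      Finset.single_le_sum (fun j _ => h0 j) (mem_univ i)
    have h2 : 0 ≤ ∑ j, u₀ j := Finset.sum_nonneg fun j _ => h0 j
    omega
  rw [← hmv]
  exact binom_mulVec_mem_aux L K ℓ hsign hrow (∑ j, u₀ j).toNat u₀ h0 hBnd hz

end Main

section GroupAlg

variable {n : ℕ} (L : Matrix (Fin n) (Fin n) ℤ) (K : Type*) [Field K]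

noncomputable def phiMap : MvPolynomial (Fin n) K →ₐ[K]
    AddMonoidAlgebra K ((Fin n → ℤ) ⧸ colLattice L) :=
  aeval (fun i => AddMonoidAlgebra.single
    (QuotientAddGroup.mk (Pi.single i 1)) 1)

def cls (L : Matrix (Fin n) (Fin n) ℤ) (d : Fin n →₀ ℕ) : (Fin n → ℤ) ⧸ colLattice L :=
  QuotientAddGroup.mk (fun i => (d i : ℤ))

lemma prod_single_pow {G : Type*} [AddCommMonoid G] (s : Finset (Fin n))
    (a : Fin n → G) (k : Fin n → ℕ) :
    ∏ i ∈ s, (AddMonoidAlgebra.single (a i) (1:K)) ^ (k i)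
      = AddMonoidAlgebra.single (∑ i ∈ s, k i • a i) 1 := by
  classical
  induction s using Finset.induction with
  | empty => simp [AddMonoidAlgebra.one_def]
  | @insert x s hx ih =>
    rw [Finset.prod_insert hx, Finset.sum_insert hx, ih,
      AddMonoidAlgebra.single_pow, AddMonoidAlgebra.single_mul_single, one_pow, one_mul]

lemma phiMap_monomial (d : Fin n →₀ ℕ) (q : K) :
    phiMap L K (monomial d q) = AddMonoidAlgebra.single (cls L d) q := by
  rw [phiMap, aeval_monomial, Finsupp.prod_fintype _ _ (fun i => pow_zero _),
    prod_single_pow]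
  have h1 : ∑ i : Fin n, (d i) • (QuotientAddGroup.mk (Pi.single i 1) :
      (Fin n → ℤ) ⧸ colLattice L) = cls L d := by
    have h2 : ∀ i : Fin n, (d i) • (QuotientAddGroup.mk (Pi.single i 1) :
        (Fin n → ℤ) ⧸ colLattice L)
        = QuotientAddGroup.mk' (colLattice L) ((d i) • Pi.single i (1:ℤ)) := by
      intro i
      rw [map_nsmul]
      rfl
    rw [Finset.sum_congr rfl (fun i _ => h2 i), ← map_sum]
    have h3 : ∑ i : Fin n, (d i) • Pi.single i (1:ℤ) = fun j => (d j : ℤ) := by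
      funext j
      rw [Finset.sum_apply]
      rw [Finset.sum_eq_single j]
      · simp
      · intro i _ hij
        simp [Pi.single_apply, hij]
      · intro h; exact absurd (mem_univ j) h
    rw [h3]
    rfl
  rw [h1]
  have : (algebraMap K (AddMonoidAlgebra K ((Fin n → ℤ) ⧸ colLattice L))) q
      = AddMonoidAlgebra.single 0 q := rfl
  rw [this, AddMonoidAlgebra.single_mul_single, zero_add, mul_one]

lemma latticeIdeal_le_ker :
    latticeIdeal K L ≤ RingHom.ker (phiMap L K) := by
  rw [latticeIdeal, Ideal.span_le]
  rintro f ⟨m, hm, rfl⟩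
  have e1 : binom K m = monomial (toN m) 1 - monomial (toN (-m)) 1 := binom_def' K m
  have hcls : cls L (toN m) = cls L (toN (-m)) := by
    rw [cls, cls, QuotientAddGroup.eq_iff_sub_mem]
    have : ((fun i => ((toN m) i : ℤ)) - fun i => ((toN (-m)) i : ℤ)) = m := by
      funext i
      simp only [Pi.sub_apply, toN_apply, Pi.neg_apply]
      omega
    rwa [this]
  simp only [SetLike.mem_coe, RingHom.mem_ker, e1, map_sub,
    phiMap_monomial, hcls, sub_self]

lemma ker_le_latticeIdeal :
    ∀ (s : ℕ) (f : MvPolynomial (Fin n) K), f.support.card ≤ s →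
      phiMap L K f = 0 → f ∈ latticeIdeal K L := by
  intro s
  induction s with
  | zero =>
    intro f hcard _
    have : f.support = ∅ := Finset.card_eq_zero.1 (Nat.le_zero.1 hcard)
    rw [MvPolynomial.support_eq_empty.1 this]
    exact zero_mem _
  | succ s ih =>
    intro f hcard hker
    classical
    by_cases h0 : f = 0
    · rw [h0]; exact zero_mem _
    have hsupp : f.support.Nonempty := by
      rw [Finset.nonempty_iff_ne_empty]
      intro h
      exact h0 (MvPolynomial.support_eq_empty.1 h)
    obtain ⟨d₀, hd₀⟩ := hsupp
    have hrepr : phiMap L K f = ∑ d ∈ f.support,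
        AddMonoidAlgebra.single (cls L d) (coeff d f) := by
      conv_lhs => rw [f.as_sum]
      rw [map_sum]
      exact Finset.sum_congr rfl fun d _ => phiMap_monomial L K d (coeff d f)
    have hsum0 : ∑ d ∈ f.support,
        (if cls L d = cls L d₀ then coeff d f else 0) = 0 := by
      have h : (∑ d ∈ f.support, AddMonoidAlgebra.single (cls L d) (coeff d f)).coeff
          (cls L d₀) = 0 := by rw [← hrepr, hker]; rfl
      rw [AddMonoidAlgebra.coeff_sum, Finsupp.finset_sum_apply] at h
      simp only [AddMonoidAlgebra.coeff_single, Finsupp.single_apply] at h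
      exact h
    have hex : ∃ d₁ ∈ f.support, d₁ ≠ d₀ ∧ cls L d₁ = cls L d₀ := by
      by_contra hno
      push_neg at hno
      rw [Finset.sum_eq_single d₀ (fun d hd hne => if_neg (hno d hd hne))
        (fun h => absurd hd₀ h), if_pos rfl] at hsum0
      exact (MvPolynomial.mem_support_iff.1 hd₀) hsum0
    obtain ⟨d₁, hd₁supp, hd₁ne, hd₁cls⟩ := hex
    set q : K := coeff d₀ f with hq
    set b : MvPolynomial (Fin n) K := monomial d₀ q - monomial d₁ q with hb
    -- b is in the lattice ideal
    have hm : ((fun i => (d₀ i : ℤ)) - (fun i => (d₁ i : ℤ))) ∈ colLattice L := by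
      have h := hd₁cls
      rw [cls, cls, QuotientAddGroup.eq_iff_sub_mem] at h
      have h2 := neg_mem h
      rwa [neg_sub] at h2
    have hbmem : b ∈ latticeIdeal K L := by
      set m : Fin n → ℤ := (fun i => (d₀ i : ℤ)) - (fun i => (d₁ i : ℤ)) with hmdef
      have hc : ∀ i, 0 ≤ (d₁ i : ℤ) := fun i => Int.ofNat_nonneg _
      have hcm : ∀ i, 0 ≤ (d₁ i : ℤ) + m i := by
        intro i; simp only [hmdef, Pi.sub_apply]; omega
      have hf := monomial_sub_factor K (fun i => (d₁ i : ℤ)) m hc hcm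
      have e1 : ((fun i => (d₁ i : ℤ)) + m) = fun i => (d₀ i : ℤ) := by
        funext i; simp only [hmdef, Pi.add_apply, Pi.sub_apply]; ring
      rw [e1, toN_coe, toN_coe] at hf
      have hb2 : b = monomial 0 q * ((monomial d₀ (1:K)) - monomial d₁ 1) := by
        rw [hb, mul_sub, monomial_mul, monomial_mul, zero_add, zero_add, mul_one]
      rw [hb2, hf]
      exact Ideal.mul_mem_left _ _ (Ideal.mul_mem_left _ _
        (Ideal.subset_span ⟨m, hm, rfl⟩))
    have hgker : phiMap L K (f - b) = 0 := by
      rw [map_sub, hker, hb, map_sub, phiMap_monomial, phiMap_monomial, hd₁cls,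
        sub_self, zero_sub, neg_zero]
    have hgsupp : (f - b).support ⊆ f.support.erase d₀ := by
      intro d hd
      have hcoeff : coeff d (f - b) ≠ 0 := MvPolynomial.mem_support_iff.1 hd
      rw [Finset.mem_erase]
      constructor
      · intro hdd₀
        subst hdd₀
        apply hcoeff
        rw [MvPolynomial.coeff_sub, hb, MvPolynomial.coeff_sub,
          MvPolynomial.coeff_monomial, if_pos rfl,
          MvPolynomial.coeff_monomial, if_neg hd₁ne, hq]
        ring
      · by_contra hdf
        apply hcoeff
        have h1 : coeff d f = 0 := MvPolynomial.notMem_support_iff.1 hdf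
        have hdd₀ : d ≠ d₀ := by rintro rfl; exact hdf hd₀
        have hdd₁ : d ≠ d₁ := by rintro rfl; exact hdf hd₁supp
        rw [MvPolynomial.coeff_sub, h1, hb, MvPolynomial.coeff_sub,
          MvPolynomial.coeff_monomial, if_neg (fun h => hdd₀ h.symm),
          MvPolynomial.coeff_monomial, if_neg (fun h => hdd₁ h.symm)]
        ring
    have hgcard : (f - b).support.card ≤ s := by
      calc (f - b).support.card ≤ (f.support.erase d₀).card :=
            Finset.card_le_card hgsupp
        _ = f.support.card - 1 := Finset.card_erase_of_mem hd₀
        _ ≤ s := by omega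
    have := ih (f - b) hgcard hgker
    have : f = (f - b) + b := by ring
    rw [this]
    exact add_mem (ih (f - b) hgcard hgker) hbmem

end GroupAlg

/-- Let `L` be an ICB matrix in `δ`-block echelon form and `K` a field,
and let `J` be the ideal generated by the binomials `f_C` for all nonempty
`C ⊆ {1,…,n-1}`.  Then `J : (xₙ) = J`, and `J` equals the lattice ideal `I(𝓛)`. -/
theorem colon_and_eq_latticeIdeal (n : ℕ) (hn : 3 ≤ n)
    (L : Matrix (Fin n) (Fin n) ℤ) (hL : IsICB n L)
    (δ : ℕ) (hech : IsBlockEchelon n δ L)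
    (K : Type*) [Field K] :
    (Ideal.span {f | ∃ C : Finset (Fin n),
        C.Nonempty ∧ (⟨n - 1, by omega⟩ : Fin n) ∉ C ∧
          f = binom K (L.mulVec (chi C))}).colon
      (Ideal.span {(X (⟨n - 1, by omega⟩ : Fin n) : MvPolynomial (Fin n) K)}) =
      Ideal.span {f | ∃ C : Finset (Fin n),
        C.Nonempty ∧ (⟨n - 1, by omega⟩ : Fin n) ∉ C ∧
          f = binom K (L.mulVec (chi C))} ∧
    Ideal.span {f | ∃ C : Finset (Fin n),
        C.Nonempty ∧ (⟨n - 1, by omega⟩ : Fin n) ∉ C ∧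
          f = binom K (L.mulVec (chi C))} = latticeIdeal K L := by
  obtain ⟨⟨hdiag, hsign, hrow, hcol⟩, hirr⟩ := hL
  have e : Jdl L K (⟨n - 1, by omega⟩ : Fin n) = Ideal.span {f | ∃ C : Finset (Fin n),
      C.Nonempty ∧ (⟨n - 1, by omega⟩ : Fin n) ∉ C ∧
        f = binom K (L.mulVec (chi C))} := rfl
  have h2 : Ideal.span {f | ∃ C : Finset (Fin n),
      C.Nonempty ∧ (⟨n - 1, by omega⟩ : Fin n) ∉ C ∧
        f = binom K (L.mulVec (chi C))} = latticeIdeal K L := by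
    rw [← e]
    apply le_antisymm
    · rw [Jdl, Ideal.span_le]
      rintro f ⟨C, hC1, hC2, rfl⟩
      exact Ideal.subset_span ⟨L.mulVec (chi C), mulVec_mem_colLattice L _, rfl⟩
    · rw [latticeIdeal, Ideal.span_le]
      rintro f ⟨m, hm, rfl⟩
      obtain ⟨u, rfl⟩ := (mem_colLattice_iff L m).1 hm
      exact binom_mulVec_mem L K _ hsign hrow u
  refine ⟨le_antisymm ?_ ?_, h2⟩
  · intro r hr
    rw [Ideal.mem_colon_span_singleton] at hr
    have hker : phiMap L K (r * X (⟨n - 1, by omega⟩ : Fin n)) = 0 := by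
      have hmem : r * X (⟨n - 1, by omega⟩ : Fin n) ∈ latticeIdeal K L := h2 ▸ hr
      exact latticeIdeal_le_ker L K hmem
    rw [map_mul] at hker
    have hX : phiMap L K (X (⟨n - 1, by omega⟩ : Fin n)) =
        AddMonoidAlgebra.single (cls L (Finsupp.single (⟨n - 1, by omega⟩ : Fin n) 1)) 1 := by
      rw [show (X (⟨n - 1, by omega⟩ : Fin n) : MvPolynomial (Fin n) K)
        = monomial (Finsupp.single (⟨n - 1, by omega⟩ : Fin n) 1) 1 from rfl,
        phiMap_monomial]
    have hr0 : phiMap L K r = 0 := by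
      have h3 : phiMap L K r *
          (AddMonoidAlgebra.single (cls L (Finsupp.single (⟨n - 1, by omega⟩ : Fin n) 1)) (1:K)
            * AddMonoidAlgebra.single (-(cls L (Finsupp.single (⟨n - 1, by omega⟩ : Fin n) 1))) 1)
          = 0 := by
        rw [← mul_assoc, ← hX, hker, zero_mul]
      rwa [AddMonoidAlgebra.single_mul_single, add_neg_cancel, one_mul,
        ← AddMonoidAlgebra.one_def, mul_one] at h3
    have hfin : r ∈ latticeIdeal K L :=
      ker_le_latticeIdeal L K r.support.card r le_rfl hr0
    rw [h2]
    exact hfin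
  · intro r hr
    rw [Ideal.mem_colon_span_singleton]
    exact Ideal.mul_mem_right _ _ hr
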